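/- Let n ≥ 2, let 1.1 ≥ C > λ₁ > λ₂ > … > λₙ > 1 be real numbers, and let ζ_{ij} (1 ≤ i < j ≤ n) be real numbers with 0 ≤ ζ_{ij} ≤ 9^{4−3j}. For 1 ≤ i ≤ n let zᵢ* = (0, …, 0, λᵢ, ζ_{i,i+1}, …, ζ_{in}) ∈ ℝⁿ (with i − 1 leading zeros), let 𝒯 be the n × n matrix with rows z₁*, …, zₙ*, and let z₀ ∈ ℝⁿ be the unique solution of 𝒯 z = 𝟏. Suppose Z is ℝⁿ equipped with a norm ‖·‖ such that ‖z₀‖ = zᵢ*·z₀ and ‖zᵢ*‖* ≤ 1 for every i ∈ {1, …, n}, where ‖·‖* is the dual norm under the standard pairing. Then every z* = (β₁, …, βₙ) ∈ ℝⁿ with max_k |1 − βₖ| ≤ 1/5 satisfies ‖z*‖* = z*·z₀. -/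

import Mathlib

lemma norm_lower_aux (n : ℕ) (hn : 0 < n) (N : (Fin n → ℝ) → ℝ)
    (hN_tri : ∀ x y : Fin n → ℝ, N (x + y) ≤ N x + N y)
    (hN_smul : ∀ (c : ℝ) (x : Fin n → ℝ), N (c • x) = |c| * N x)
    (hN_pos : ∀ x : Fin n → ℝ, x ≠ 0 → 0 < N x) :
    ∃ m > 0, ∀ z : Fin n → ℝ, m * ‖z‖ ≤ N z := by
  have hN0 : N 0 = 0 := by
    have := hN_smul 0 0; simpa using this
  have hNneg : ∀ x, N (-x) = N x := by
    intro x
    have := hN_smul (-1) x; simpa using this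
  -- N is Lipschitz
  set K : ℝ := ∑ k : Fin n, N (Pi.single k 1) with hK
  have hK0 : 0 ≤ K := Finset.sum_nonneg fun k _ =>
    (hN_pos _ (by simp [Pi.single_eq_same, Function.ne_iff])).le
  have hbound : ∀ z : Fin n → ℝ, N z ≤ ∑ k : Fin n, |z k| * N (Pi.single k 1) := by
    intro z
    have hz : z = ∑ k : Fin n, (z k) • (Pi.single k 1 : Fin n → ℝ) := by
      funext j
      simp [Finset.sum_apply, Pi.single_apply]
    calc N z = N (∑ k : Fin n, (z k) • (Pi.single k 1 : Fin n → ℝ)) := by rw [← hz]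
      _ ≤ ∑ k : Fin n, N ((z k) • (Pi.single k 1 : Fin n → ℝ)) :=
          Finset.le_sum_of_subadditive N hN0.le hN_tri _ _
      _ = ∑ k : Fin n, |z k| * N (Pi.single k 1) := by
          simp [hN_smul]
  have hlip : ∀ x y : Fin n → ℝ, N x - N y ≤ K * dist x y := by
    intro x y
    have h1 : N x ≤ N y + N (x - y) := by
      have := hN_tri y (x - y); simpa using this
    have h2 : N (x - y) ≤ K * dist x y := by
      calc N (x - y) ≤ ∑ k : Fin n, |(x - y) k| * N (Pi.single k 1) := hbound _
        _ ≤ ∑ k : Fin n, dist x y * N (Pi.single k 1) := by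
            refine Finset.sum_le_sum fun k _ => ?_
            refine mul_le_mul_of_nonneg_right ?_ (hN_pos _ ?_).le
            · have := dist_le_pi_dist x y k
              simpa [Real.dist_eq] using this
            · simp [Function.ne_iff]
        _ = K * dist x y := by rw [← Finset.mul_sum, mul_comm]
    linarith
  have hcont : Continuous N := by
    rw [Metric.continuous_iff]
    intro x ε hε
    rcases eq_or_lt_of_le hK0 with hK0' | hK0'
    · exact ⟨1, one_pos, fun y _ => by
        have h1 := hlip y x; have h2 := hlip x y
        rw [← hK0'] at h1 h2
        have : N y = N x := by rw [dist_comm] at h2; nlinarith [dist_nonneg (x := y) (y := x)]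
        simpa [Real.dist_eq, this] using hε⟩
    · refine ⟨ε / K, by positivity, fun y hy => ?_⟩
      have h1 := hlip y x
      have h2 := hlip x y
      rw [dist_comm x y] at h2
      have h3 : K * dist y x < ε := by
        have h4 : dist y x * K < ε := (lt_div_iff₀ hK0').mp hy
        linarith [mul_comm K (dist y x)]
      rw [Real.dist_eq, abs_lt]
      constructor <;> linarith
  -- minimum on the sphere
  have hne : (Metric.sphere (0 : Fin n → ℝ) 1).Nonempty := by
    refine ⟨Pi.single ⟨0, hn⟩ 1, ?_⟩
    simp [Pi.norm_single]
  obtain ⟨zm, hzm, hmin⟩ := (isCompact_sphere (0 : Fin n → ℝ) 1).exists_isMinOn hne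
    hcont.continuousOn
  have hzm1 : ‖zm‖ = 1 := by simpa using hzm
  have hzm0 : zm ≠ 0 := by
    intro h; rw [h] at hzm1; simp at hzm1
  refine ⟨N zm, hN_pos _ hzm0, fun z => ?_⟩
  rcases eq_or_ne z 0 with rfl | hz
  · simp [hN0]
  · have hnz : (0:ℝ) < ‖z‖ := norm_pos_iff.mpr hz
    have hu : (‖z‖⁻¹ • z) ∈ Metric.sphere (0 : Fin n → ℝ) 1 := by
      simp [norm_smul, abs_of_pos (inv_pos.mpr hnz), inv_mul_cancel₀ hnz.ne']
    have h1 : N zm ≤ N (‖z‖⁻¹ • z) := hmin hu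
    have h2 : N (‖z‖⁻¹ • z) = ‖z‖⁻¹ * N z := by
      rw [hN_smul, abs_of_pos (inv_pos.mpr hnz)]
    rw [h2] at h1
    calc N zm * ‖z‖ ≤ (‖z‖⁻¹ * N z) * ‖z‖ := by nlinarith
      _ = N z := by field_simp

/-- **Lemma 4.7, second part.** With `n`, `C`, `λᵢ`, `ζ_{ij}` and the triangular matrix
`𝒯` as in the first part, let `z₀` be the solution of `𝒯 z = 𝟏`. Suppose `ℝⁿ` carries a
norm `N` such that `N z₀ = zᵢ*·z₀` (where `zᵢ*` is the `i`-th row of `𝒯`) and the dual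
norm of each `zᵢ*` is at most `1`. Then every `β` with `max_k |1 − βₖ| ≤ 1/5` has dual
norm `β·z₀`. (Lean index `j : Fin n` corresponds to paper index `j + 1`.) -/
theorem stmt11 (n : ℕ) (hn : 2 ≤ n) (C : ℝ) (lam : Fin n → ℝ) (ζ : Fin n → Fin n → ℝ)
    (hC : C ≤ 1.1) (hlamC : ∀ i, lam i < C) (hanti : StrictAnti lam)
    (hlam : ∀ i, 1 < lam i)
    (hζ : ∀ i j : Fin n, i < j →
      0 ≤ ζ i j ∧ ζ i j ≤ (9 : ℝ) ^ ((4 : ℤ) - 3 * ((j : ℕ) + 1)))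
    (𝒯 : Matrix (Fin n) (Fin n) ℝ)
    (h𝒯 : ∀ i j : Fin n, 𝒯 i j = if i = j then lam i else if i < j then ζ i j else 0)
    (z₀ : Fin n → ℝ) (hz₀ : 𝒯.mulVec z₀ = fun _ => 1)
    (N : (Fin n → ℝ) → ℝ)
    (hN_tri : ∀ x y : Fin n → ℝ, N (x + y) ≤ N x + N y)
    (hN_smul : ∀ (c : ℝ) (x : Fin n → ℝ), N (c • x) = |c| * N x)
    (hN_pos : ∀ x : Fin n → ℝ, x ≠ 0 → 0 < N x)
    (hNz₀ : ∀ i : Fin n, N z₀ = ∑ k, 𝒯 i k * z₀ k)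
    (hdual : ∀ i : Fin n,
      sSup {r : ℝ | ∃ z : Fin n → ℝ, N z ≤ 1 ∧ r = ∑ k, 𝒯 i k * z k} ≤ 1) :
    ∀ β : Fin n → ℝ, (∀ k, |1 - β k| ≤ 1 / 5) →
      sSup {r : ℝ | ∃ z : Fin n → ℝ, N z ≤ 1 ∧ r = ∑ k, β k * z k} =
        ∑ k, β k * z₀ k := by
  intro β hβ
  have hn0 : 0 < n := by omega
  -- basic bounds on β
  have hβ' : ∀ k, 4/5 ≤ β k ∧ β k ≤ 6/5 := by
    intro k
    have := abs_le.mp (hβ k)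
    constructor <;> linarith [this.1, this.2]
  -- the matrix is invertible
  have hdet : IsUnit 𝒯.det := by
    have h : 𝒯.BlockTriangular id := by
      intro i j hij
      rw [h𝒯]
      have h1 : i ≠ j := by exact fun h => absurd h (by intro h; subst h; exact lt_irrefl _ hij)
      have h2 : ¬ i < j := not_lt.mpr (le_of_lt hij)
      simp [h1, h2]
    rw [Matrix.det_of_upperTriangular h]
    refine isUnit_iff_ne_zero.mpr (Finset.prod_ne_zero_iff.mpr fun i _ => ?_)
    have hii : 𝒯 i i = lam i := by simp [h𝒯]
    have := hlam i
    rw [hii]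
    intro h; rw [h] at this; linarith
  -- the coefficient vector
  set c : Fin n → ℝ := (𝒯.transpose)⁻¹.mulVec β with hc_def
  have heq : ∀ j, ∑ i, 𝒯 i j * c i = β j := by
    have h : 𝒯.transpose.mulVec c = β := by
      rw [hc_def, Matrix.mulVec_mulVec, Matrix.mul_nonsing_inv _ (by rwa [Matrix.det_transpose]),
        Matrix.one_mulVec]
    intro j
    have := congrFun h j
    simpa [Matrix.mulVec, dotProduct, Matrix.transpose_apply, mul_comm] using this
  -- the row sums against z₀ are all 1
  have hrow : ∀ i, ∑ k, 𝒯 i k * z₀ k = 1 := by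
    intro i
    have := congrFun hz₀ i
    simpa [Matrix.mulVec, dotProduct] using this
  have hNz₀1 : N z₀ = 1 := (hNz₀ ⟨0, hn0⟩).trans (hrow _)
  -- split of the defining equation for c
  have hsplit : ∀ j : Fin n, β j = lam j * c j +
      ∑ i ∈ Finset.univ.filter (fun i => i < j), ζ i j * c i := by
    intro j
    have h1 : ∀ i : Fin n, 𝒯 i j * c i =
        (if i = j then lam j * c j else 0) + (if i < j then ζ i j * c i else 0) := by
      intro i
      rcases lt_trichotomy i j with h | h | h
      · simp [h𝒯, h, h.ne, not_lt.mpr h.le]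
      · subst h; simp [h𝒯]
      · simp [h𝒯, h.ne', not_lt.mpr h.le]
    rw [← heq j, Finset.sum_congr rfl (fun i _ => h1 i), Finset.sum_add_distrib,
      Finset.sum_ite_eq' Finset.univ j, ← Finset.sum_filter]
    simp
  -- bounds on c by strong induction
  have hcb : ∀ m : ℕ, ∀ j : Fin n, (j : ℕ) = m → 0 ≤ c j ∧ c j ≤ 6/5 := by
    intro m
    induction m using Nat.strong_induction_on with
    | _ m ih =>
      intro j hj
      set S := ∑ i ∈ Finset.univ.filter (fun i => i < j), ζ i j * c i with hS_def
      have hterm : ∀ i ∈ Finset.univ.filter (fun i => i < j),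
          0 ≤ ζ i j * c i ∧ ζ i j * c i ≤ (9:ℝ) ^ ((4:ℤ) - 3 * ((j:ℕ)+1)) * (6/5) := by
        intro i hi
        have hij : i < j := by simpa using hi
        obtain ⟨hζ0, hζ1⟩ := hζ i j hij
        obtain ⟨hc0, hc1⟩ := ih (i : ℕ) (by rw [← hj]; exact Fin.lt_def.mp hij) i rfl
        constructor
        · exact mul_nonneg hζ0 hc0
        · exact mul_le_mul hζ1 hc1 hc0 (by positivity)
      have hS0 : 0 ≤ S := Finset.sum_nonneg fun i hi => (hterm i hi).1
      have hcard : (Finset.univ.filter (fun i => i < j)).card = (j : ℕ) := by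
        have : Finset.univ.filter (fun i => i < j) = Finset.Iio j := by
          ext i; simp
        rw [this, Fin.card_Iio]
      have hS1 : S ≤ 4/5 := by
        rcases Nat.eq_zero_or_pos (j : ℕ) with h0 | h0
        · have : Finset.univ.filter (fun i => i < j) = ∅ := by
            rw [← Finset.card_eq_zero, hcard, h0]
          rw [hS_def, this, Finset.sum_empty]; norm_num
        · have h2 : S ≤ (j : ℕ) * ((9:ℝ) ^ ((4:ℤ) - 3 * ((j:ℕ)+1)) * (6/5)) := by
            calc S ≤ ∑ _i ∈ Finset.univ.filter (fun i => i < j),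
                (9:ℝ) ^ ((4:ℤ) - 3 * ((j:ℕ)+1)) * (6/5) :=
                  Finset.sum_le_sum fun i hi => (hterm i hi).2
              _ = (j : ℕ) * ((9:ℝ) ^ ((4:ℤ) - 3 * ((j:ℕ)+1)) * (6/5)) := by
                  rw [Finset.sum_const, hcard, nsmul_eq_mul]
          set M : ℕ := (j : ℕ) with hM
          have hM9 : (M : ℝ) ≤ (9:ℝ) ^ (M : ℤ) := by
            have h9 : (M : ℝ) ≤ (9:ℝ) ^ M := by
              have := Nat.lt_pow_self (a := 9) (n := M) (by norm_num)
              exact_mod_cast this.le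
            rw [zpow_natCast]; exact h9
          have hkey : (M : ℝ) * (9:ℝ) ^ ((4:ℤ) - 3 * ((M:ℕ)+1)) ≤ (9:ℝ) ^ (-1 : ℤ) := by
            calc (M : ℝ) * (9:ℝ) ^ ((4:ℤ) - 3 * ((M:ℕ)+1))
                ≤ (9:ℝ) ^ (M : ℤ) * (9:ℝ) ^ ((4:ℤ) - 3 * ((M:ℕ)+1)) := by
                  apply mul_le_mul_of_nonneg_right hM9 (by positivity)
              _ = (9:ℝ) ^ ((M : ℤ) + ((4:ℤ) - 3 * ((M:ℕ)+1))) := by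
                  rw [← zpow_add₀ (by norm_num : (9:ℝ) ≠ 0)]
              _ ≤ (9:ℝ) ^ (-1 : ℤ) := by
                  apply zpow_le_zpow_right₀ (by norm_num)
                  push_cast
                  omega
          have h91 : (9:ℝ) ^ (-1 : ℤ) = 1/9 := by norm_num
          rw [h91] at hkey
          calc S ≤ (M : ℕ) * ((9:ℝ) ^ ((4:ℤ) - 3 * ((M:ℕ)+1)) * (6/5)) := h2
            _ = ((M : ℝ) * (9:ℝ) ^ ((4:ℤ) - 3 * ((M:ℕ)+1))) * (6/5) := by ring
            _ ≤ (1/9) * (6/5) := by nlinarith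
            _ ≤ 4/5 := by norm_num
      have heqj : lam j * c j = β j - S := by
        have := hsplit j; rw [← hS_def] at this; linarith
      have hlamj := hlam j
      obtain ⟨hb1, hb2⟩ := hβ' j
      constructor
      · nlinarith
      · nlinarith
  have hc01 : ∀ i, 0 ≤ c i ∧ c i ≤ 6/5 := fun i => hcb (i : ℕ) i rfl
  -- rewriting β·z as ∑ c i (row i · z)
  have hrewrite : ∀ z : Fin n → ℝ, ∑ k, β k * z k = ∑ i, c i * ∑ k, 𝒯 i k * z k := by
    intro z
    calc ∑ k, β k * z k = ∑ k, ∑ i, c i * (𝒯 i k * z k) := by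
          refine Finset.sum_congr rfl fun k _ => ?_
          rw [← heq k, Finset.sum_mul]
          exact Finset.sum_congr rfl fun i _ => by ring
      _ = ∑ i, ∑ k, c i * (𝒯 i k * z k) := Finset.sum_comm
      _ = ∑ i, c i * ∑ k, 𝒯 i k * z k := by
          refine Finset.sum_congr rfl fun i _ => ?_
          rw [Finset.mul_sum]
  have hβz₀ : ∑ k, β k * z₀ k = ∑ i, c i := by
    rw [hrewrite z₀]
    simp [hrow]
  -- the sets are bounded above
  obtain ⟨m, hm, hmle⟩ := norm_lower_aux n hn0 N hN_tri hN_smul hN_pos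
  have hBdd : ∀ v : Fin n → ℝ, BddAbove {r : ℝ | ∃ z, N z ≤ 1 ∧ r = ∑ k, v k * z k} := by
    intro v
    refine ⟨(∑ k, |v k|) * (1/m), ?_⟩
    rintro r ⟨z, hz, rfl⟩
    have hzn : ‖z‖ ≤ 1/m := by
      rw [le_div_iff₀ hm]
      have := hmle z
      linarith [mul_comm m ‖z‖]
    calc ∑ k, v k * z k ≤ ∑ k, |v k| * (1/m) := by
          refine Finset.sum_le_sum fun k _ => ?_
          calc v k * z k ≤ |v k * z k| := le_abs_self _
            _ = |v k| * |z k| := abs_mul _ _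
            _ ≤ |v k| * (1/m) := by
                refine mul_le_mul_of_nonneg_left ?_ (abs_nonneg _)
                calc |z k| = ‖z k‖ := rfl
                  _ ≤ ‖z‖ := norm_le_pi_norm z k
                  _ ≤ 1/m := hzn
      _ = (∑ k, |v k|) * (1/m) := by rw [Finset.sum_mul]
  have hle1 : ∀ (i : Fin n) (z : Fin n → ℝ), N z ≤ 1 → ∑ k, 𝒯 i k * z k ≤ 1 :=
    fun i z hz => le_trans (le_csSup (hBdd _) ⟨z, hz, rfl⟩) (hdual i)
  -- upper bound for all elements of the set
  have hub : ∀ r ∈ {r : ℝ | ∃ z, N z ≤ 1 ∧ r = ∑ k, β k * z k}, r ≤ ∑ k, β k * z₀ k := by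
    rintro r ⟨z, hz, rfl⟩
    calc ∑ k, β k * z k = ∑ i, c i * ∑ k, 𝒯 i k * z k := hrewrite z
      _ ≤ ∑ i, c i * 1 := Finset.sum_le_sum fun i _ =>
            mul_le_mul_of_nonneg_left (hle1 i z hz) (hc01 i).1
      _ = ∑ i, c i := by simp
      _ = ∑ k, β k * z₀ k := hβz₀.symm
  have hmem : (∑ k, β k * z₀ k) ∈ {r : ℝ | ∃ z, N z ≤ 1 ∧ r = ∑ k, β k * z k} :=
    ⟨z₀, hNz₀1.le, rfl⟩
  exact le_antisymm (csSup_le ⟨_, hmem⟩ hub) (le_csSup ⟨_, hub⟩ hmem)
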